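/- For every integer d ≥ 2 there exists n₀ such that for every n ≥ n₀ there is a d-uniform hypergraph H on n vertices whose fractional vertex CM-cover number satisfies vc*_CM(H) ≥ (0.53/d!)·n^(d−1)/log₂ n. -/

import Mathlib

/-- A `(d,k)`-cuph (complete `d`-uniform `k`-partite hypergraph, for some `k`)
subhypergraph of the `d`-uniform hypergraph with vertex type `V` and edge set
`E`: its vertex set is partitioned into `k` nonempty pairwise disjoint parts,
its edges are exactly the `d`-element subsets of its vertex set meeting every
part in at most one vertex (hence meeting `d` of the parts, each in a single
vertex), and all of its edges belong to `E`. -/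
structure CuphSub (V : Type*) [Fintype V] [DecidableEq V] (d : ℕ)
    (E : Finset (Finset V)) where
  k : ℕ
  parts : Fin k → Finset V
  nonempty : ∀ i, (parts i).Nonempty
  disjoint : ∀ i j, i ≠ j → Disjoint (parts i) (parts j)
  sub : ∀ e : Finset V,
    (e.card = d ∧ e ⊆ Finset.univ.biUnion parts ∧ ∀ i, (e ∩ parts i).card ≤ 1) →
      e ∈ E

namespace CuphSub

variable {V : Type*} [Fintype V] [DecidableEq V] {d : ℕ} {E : Finset (Finset V)}

/-- The vertex set of a `(d,k)`-cuph subhypergraph. -/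
def verts (C : CuphSub V d E) : Finset V := Finset.univ.biUnion C.parts

/-- The edge set of a `(d,k)`-cuph subhypergraph. -/
def edges (C : CuphSub V d E) : Finset (Finset V) :=
  Finset.univ.filter fun e =>
    e.card = d ∧ e ⊆ C.verts ∧ ∀ i, (e ∩ C.parts i).card ≤ 1

/-- The density `|E|/|V|` of a `(d,k)`-cuph subhypergraph. -/
noncomputable def density (C : CuphSub V d E) : ℝ :=
  (C.edges.card : ℝ) / (C.verts.card : ℝ)

end CuphSub

set_option maxHeartbeats 1000000

section AuxCMcover
open Finset


lemma sum_bern {α : Type*} [DecidableEq α] (p q : ℝ) (S : Finset α) :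
    ∑ E ∈ S.powerset, p ^ E.card * q ^ (S.card - E.card) = (p + q) ^ S.card := by
  induction S using Finset.induction_on with
  | empty => simp
  | @insert a s ha ih =>
    rw [Finset.sum_powerset_insert ha, card_insert_of_notMem ha]
    have h1 : ∑ t ∈ s.powerset, p ^ t.card * q ^ (s.card + 1 - t.card)
        = q * ∑ t ∈ s.powerset, p ^ t.card * q ^ (s.card - t.card) := by
      rw [Finset.mul_sum]
      refine Finset.sum_congr rfl fun t ht => ?_
      have hts : t.card ≤ s.card := card_le_card (mem_powerset.mp ht)
      have : s.card + 1 - t.card = (s.card - t.card) + 1 := by omega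
      rw [this, pow_succ]; ring
    have h2 : ∑ t ∈ s.powerset, p ^ (insert a t).card * q ^ (s.card + 1 - (insert a t).card)
        = p * ∑ t ∈ s.powerset, p ^ t.card * q ^ (s.card - t.card) := by
      rw [Finset.mul_sum]
      refine Finset.sum_congr rfl fun t ht => ?_
      have hat : a ∉ t := fun h => ha (mem_powerset.mp ht h)
      rw [card_insert_of_notMem hat]
      have : s.card + 1 - (t.card + 1) = s.card - t.card := by omega
      rw [this, pow_succ]; ring
    rw [h1, h2, ih, pow_succ]; ring

lemma sum_bern_superset {α : Type*} [DecidableEq α] (p q : ℝ) {S T : Finset α} (hTS : T ⊆ S) :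
    ∑ E ∈ S.powerset.filter (fun E => T ⊆ E), p ^ E.card * q ^ (S.card - E.card)
      = p ^ T.card * (p + q) ^ (S.card - T.card) := by
  have key : ∑ F ∈ (S \ T).powerset, p ^ (F ∪ T).card * q ^ (S.card - (F ∪ T).card)
      = p ^ T.card * (p + q) ^ (S.card - T.card) := by
    have : ∀ F ∈ (S \ T).powerset,
        p ^ (F ∪ T).card * q ^ (S.card - (F ∪ T).card)
          = p ^ T.card * (p ^ F.card * q ^ ((S \ T).card - F.card)) := by
      intro F hF
      have hFsub : F ⊆ S \ T := mem_powerset.mp hF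
      have hdisj : Disjoint F T := Finset.sdiff_disjoint.mono_left hFsub
      have hcard : (F ∪ T).card = F.card + T.card := by
        rw [card_union_of_disjoint hdisj]
      have hFS : F.card ≤ (S \ T).card := card_le_card hFsub
      have hTc : T.card ≤ S.card := card_le_card hTS
      have hsd : (S \ T).card = S.card - T.card := card_sdiff_of_subset hTS
      have h2 : S.card - (F ∪ T).card = (S \ T).card - F.card := by omega
      rw [h2, hcard, pow_add]; ring
    rw [Finset.sum_congr rfl this, ← Finset.mul_sum, sum_bern, card_sdiff_of_subset hTS]
  rw [← key]
  refine Finset.sum_nbij' (fun E => E \ T) (fun F => F ∪ T) ?_ ?_ ?_ ?_ ?_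
  · intro E hE
    simp only [mem_filter, mem_powerset] at hE
    exact mem_powerset.mpr (sdiff_subset_sdiff hE.1 Subset.rfl)
  · intro F hF
    have hFsub : F ⊆ S \ T := mem_powerset.mp hF
    refine mem_filter.mpr ⟨mem_powerset.mpr ?_, subset_union_right⟩
    exact union_subset (hFsub.trans sdiff_subset) hTS
  · intro E hE
    simp only [mem_filter, mem_powerset] at hE
    exact sdiff_union_of_subset hE.2
  · intro F hF
    have hFsub : F ⊆ S \ T := mem_powerset.mp hF
    have hdisj : Disjoint F T := Finset.sdiff_disjoint.mono_left hFsub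
    exact Finset.union_sdiff_cancel_right hdisj
  · intro E hE
    simp only [mem_filter, mem_powerset] at hE
    simp only [sdiff_union_of_subset hE.2]

section Bern
variable {α : Type*} [DecidableEq α] {p : ℝ} {S : Finset α}

/-- the Bernoulli weight -/
noncomputable def bw (p : ℝ) (S E : Finset α) : ℝ := p ^ E.card * (1 - p) ^ (S.card - E.card)

lemma bw_nonneg (hp : 0 ≤ p) (hp1 : p ≤ 1) (E : Finset α) : 0 ≤ bw p S E := by
  have : (0:ℝ) ≤ 1 - p := by linarith
  exact mul_nonneg (pow_nonneg hp _) (pow_nonneg this _)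

lemma bw_total : ∑ E ∈ S.powerset, bw p S E = 1 := by
  unfold bw; rw [sum_bern]; norm_num

lemma bw_superset {T : Finset α} (hTS : T ⊆ S) :
    ∑ E ∈ S.powerset.filter (fun E => T ⊆ E), bw p S E = p ^ T.card := by
  unfold bw; rw [sum_bern_superset _ _ hTS]; norm_num

lemma card_eq_sum_ite (E : Finset α) (hE : E ∈ S.powerset) :
    ((E.card : ℝ)) = ∑ e ∈ S, if e ∈ E then (1:ℝ) else 0 := by
  rw [Finset.sum_boole]
  congr 1
  rw [Finset.filter_mem_eq_inter, Finset.inter_eq_right.mpr (mem_powerset.mp hE)]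

lemma bw_moment1 :
    ∑ E ∈ S.powerset, bw p S E * E.card = p * S.card := by
  calc ∑ E ∈ S.powerset, bw p S E * E.card
      = ∑ E ∈ S.powerset, ∑ e ∈ S, (if e ∈ E then bw p S E else 0) := by
        refine Finset.sum_congr rfl fun E hE => ?_
        rw [card_eq_sum_ite E hE, Finset.mul_sum]
        refine Finset.sum_congr rfl fun e _ => ?_
        split_ifs <;> simp
    _ = ∑ e ∈ S, ∑ E ∈ S.powerset, (if e ∈ E then bw p S E else 0) := Finset.sum_comm
    _ = ∑ e ∈ S, (p : ℝ) := by
        refine Finset.sum_congr rfl fun e he => ?_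
        rw [← Finset.sum_filter]
        have h1 : S.powerset.filter (fun E => e ∈ E)
            = S.powerset.filter (fun E => {e} ⊆ E) := by
          simp [Finset.singleton_subset_iff]
        rw [h1, bw_superset (Finset.singleton_subset_iff.mpr he), Finset.card_singleton, pow_one]
    _ = p * S.card := by rw [Finset.sum_const, nsmul_eq_mul]; ring

lemma bw_moment2 :
    ∑ E ∈ S.powerset, bw p S E * (E.card : ℝ) ^ 2
      = p * S.card + p ^ 2 * ((S.card:ℝ) ^ 2 - S.card) := by
  calc ∑ E ∈ S.powerset, bw p S E * (E.card:ℝ) ^ 2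
      = ∑ E ∈ S.powerset, ∑ e ∈ S, ∑ f ∈ S,
          (if e ∈ E ∧ f ∈ E then bw p S E else 0) := by
        refine Finset.sum_congr rfl fun E hE => ?_
        rw [sq, card_eq_sum_ite E hE, Finset.sum_mul_sum, Finset.mul_sum]
        refine Finset.sum_congr rfl fun e _ => ?_
        rw [Finset.mul_sum]
        refine Finset.sum_congr rfl fun f _ => ?_
        split_ifs with h1 h2 h3 <;> simp_all <;> ring
    _ = ∑ e ∈ S, ∑ f ∈ S, ∑ E ∈ S.powerset,
          (if e ∈ E ∧ f ∈ E then bw p S E else 0) := by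
        rw [Finset.sum_comm]
        refine Finset.sum_congr rfl fun e _ => Finset.sum_comm
    _ = ∑ e ∈ S, ∑ f ∈ S, (if e = f then p else p ^ 2) := by
        refine Finset.sum_congr rfl fun e he => Finset.sum_congr rfl fun f hf => ?_
        rw [← Finset.sum_filter]
        have h1 : S.powerset.filter (fun E => e ∈ E ∧ f ∈ E)
            = S.powerset.filter (fun E => ({e, f} : Finset α) ⊆ E) := by
          simp [Finset.insert_subset_iff, Finset.singleton_subset_iff]
        have h2 : ({e, f} : Finset α) ⊆ S := by
          simp [Finset.insert_subset_iff, Finset.singleton_subset_iff, he, hf]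
        rw [h1, bw_superset h2]
        by_cases hef : e = f
        · simp [hef]
        · rw [if_neg hef, Finset.card_insert_of_notMem (by simpa using hef),
            Finset.card_singleton]
    _ = ∑ e ∈ S, (p + ((S.card:ℝ) - 1) * p ^ 2) := by
        refine Finset.sum_congr rfl fun e he => ?_
        have : ∀ f ∈ S, (if e = f then p else p ^ 2)
            = (if e = f then p - p ^ 2 else 0) + p ^ 2 := by
          intro f _; split_ifs <;> ring
        rw [Finset.sum_congr rfl this, Finset.sum_add_distrib, Finset.sum_ite_eq S e
          (fun _ => p - p^2), if_pos he, Finset.sum_const, nsmul_eq_mul]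
        ring
    _ = p * S.card + p ^ 2 * ((S.card:ℝ) ^ 2 - S.card) := by
        rw [Finset.sum_const, nsmul_eq_mul]; ring

lemma bw_chebyshev (hp : 0 < p) (hp1 : p ≤ 1) {ε : ℝ} (hε : 0 < ε) (hN : 0 < S.card) :
    ∑ E ∈ S.powerset.filter (fun E => (E.card:ℝ) ≤ (1 - ε) * (p * S.card)), bw p S E
      ≤ (1 - p) / (ε ^ 2 * p * S.card) := by
  set N : ℝ := (S.card : ℝ) with hNdef
  have hNpos : (0:ℝ) < N := by exact_mod_cast Nat.cast_pos.mpr hN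
  have central : ∑ E ∈ S.powerset, bw p S E * ((E.card:ℝ) - p * N) ^ 2
      = p * (1 - p) * N := by
    have expand : ∀ E ∈ S.powerset, bw p S E * ((E.card:ℝ) - p * N) ^ 2
        = bw p S E * (E.card:ℝ)^2 - (2 * p * N) * (bw p S E * E.card)
          + (p * N)^2 * bw p S E := by
      intro E _; ring
    rw [Finset.sum_congr rfl expand]
    rw [Finset.sum_add_distrib, Finset.sum_sub_distrib, ← Finset.mul_sum, ← Finset.mul_sum,
      bw_moment1, bw_moment2, bw_total]
    ring
  have hkey : (ε * (p * N)) ^ 2 * ∑ E ∈ S.powerset.filter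
        (fun E => (E.card:ℝ) ≤ (1 - ε) * (p * N)), bw p S E
      ≤ p * (1 - p) * N := by
    rw [← central, Finset.mul_sum]
    refine le_trans (Finset.sum_le_sum ?_) (Finset.sum_le_sum_of_subset_of_nonneg
      (Finset.filter_subset _ _) ?_)
    · intro E hE
      simp only [Finset.mem_filter] at hE
      have h1 : ε * (p * N) ≤ p * N - E.card := by nlinarith [hE.2]
      have h2 : (0:ℝ) ≤ ε * (p * N) := by positivity
      have h3 : (ε * (p * N))^2 ≤ ((E.card:ℝ) - p * N)^2 := by nlinarith
      have h4 : 0 ≤ bw p S E := bw_nonneg hp.le hp1 E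
      calc (ε * (p * N))^2 * bw p S E ≤ ((E.card:ℝ) - p * N)^2 * bw p S E := by
            exact mul_le_mul_of_nonneg_right h3 h4
        _ = bw p S E * ((E.card:ℝ) - p * N)^2 := by ring
    · intro E _ _
      exact mul_nonneg (bw_nonneg hp.le hp1 E) (sq_nonneg _)
  have hpos : (0:ℝ) < (ε * (p * N))^2 := by positivity
  calc ∑ E ∈ S.powerset.filter (fun E => (E.card:ℝ) ≤ (1-ε) * (p * N)), bw p S E
        = ((ε * (p * N))^2 * ∑ E ∈ S.powerset.filter
            (fun E => (E.card:ℝ) ≤ (1-ε) * (p * N)), bw p S E) / (ε * (p * N))^2 := by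
          field_simp
      _ ≤ (p * (1 - p) * N) / (ε * (p * N))^2 := by
          gcongr
      _ = (1 - p) / (ε ^ 2 * p * N) := by
          field_simp

lemma bw_union_bound (hp : 0 ≤ p) (hp1 : p ≤ 1) {β : Type*} (B : Finset β)
    (T : β → Finset α) (hT : ∀ b ∈ B, T b ⊆ S) :
    ∑ E ∈ S.powerset.filter (fun E => ∃ b ∈ B, T b ⊆ E), bw p S E
      ≤ ∑ b ∈ B, p ^ (T b).card := by
  calc ∑ E ∈ S.powerset.filter (fun E => ∃ b ∈ B, T b ⊆ E), bw p S E
      ≤ ∑ E ∈ S.powerset.filter (fun E => ∃ b ∈ B, T b ⊆ E),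
          ∑ b ∈ B, (if T b ⊆ E then bw p S E else 0) := by
        refine Finset.sum_le_sum fun E hE => ?_
        simp only [Finset.mem_filter] at hE
        obtain ⟨b₀, hb₀B, hb₀⟩ := hE.2
        have h1 : (if T b₀ ⊆ E then bw p S E else 0)
            ≤ ∑ b ∈ B, (if T b ⊆ E then bw p S E else 0) := by
          refine Finset.single_le_sum (f := fun b => if T b ⊆ E then bw p S E else 0)
            (fun b _ => ?_) hb₀B
          by_cases h : T b ⊆ E
          · simpa [h] using bw_nonneg hp hp1 E
          · simp [h]
        rw [if_pos hb₀] at h1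
        exact h1
    _ ≤ ∑ E ∈ S.powerset, ∑ b ∈ B, (if T b ⊆ E then bw p S E else 0) := by
        refine Finset.sum_le_sum_of_subset_of_nonneg (Finset.filter_subset _ _) ?_
        intro E _ _
        refine Finset.sum_nonneg fun b _ => ?_
        split_ifs
        · exact bw_nonneg hp hp1 E
        · exact le_refl 0
    _ = ∑ b ∈ B, ∑ E ∈ S.powerset, (if T b ⊆ E then bw p S E else 0) := by
        rw [Finset.sum_comm]
    _ ≤ ∑ b ∈ B, p ^ (T b).card := by
        refine Finset.sum_le_sum fun b hb => ?_
        rw [← Finset.sum_filter, bw_superset (hT b hb)]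

end Bern


variable {n : ℕ}

def validQ (n : ℕ) : Finset (Finset (Finset (Fin n))) :=
  Finset.univ.filter fun Q => (∀ P ∈ Q, P.Nonempty) ∧
    ∀ P ∈ Q, ∀ P' ∈ Q, P ≠ P' → Disjoint P P'

def vertsQ (Q : Finset (Finset (Fin n))) : Finset (Fin n) := Q.biUnion id

def TQ (d : ℕ) (Q : Finset (Finset (Fin n))) : Finset (Finset (Fin n)) :=
  Finset.univ.filter fun e => e.card = d ∧ e ⊆ vertsQ Q ∧ ∀ P ∈ Q, (e ∩ P).card ≤ 1

/-- canonical encoding function of a partition -/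
def fQ (Q : Finset (Finset (Fin n))) (x : Fin n) : Fin n :=
  WithTop.untopD x (((Q.filter (fun P => x ∈ P)).biUnion id).min)

lemma filter_eq_singleton (hQ : Q ∈ validQ n) {P : Finset (Fin n)} (hP : P ∈ Q)
    {x : Fin n} (hx : x ∈ P) : Q.filter (fun P' => x ∈ P') = {P} := by
  simp only [validQ, mem_filter, mem_univ, true_and] at hQ
  ext P'
  simp only [mem_filter, mem_singleton]
  constructor
  · rintro ⟨hP', hxP'⟩
    by_contra hne
    exact (Finset.disjoint_left.mp (hQ.2 P' hP' P hP hne) hxP') hx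
  · rintro rfl; exact ⟨hP, hx⟩

lemma fQ_eq_min' (hQ : Q ∈ validQ n) {P : Finset (Fin n)} (hP : P ∈ Q)
    {x : Fin n} (hx : x ∈ P) : fQ Q x = P.min' ⟨x, hx⟩ := by
  unfold fQ
  rw [filter_eq_singleton hQ hP hx, Finset.singleton_biUnion, id,
    ← Finset.coe_min' (⟨x, hx⟩ : P.Nonempty)]
  rfl

lemma fQ_mem (hQ : Q ∈ validQ n) {P : Finset (Fin n)} (hP : P ∈ Q)
    {x : Fin n} (hx : x ∈ P) : fQ Q x ∈ P := by
  rw [fQ_eq_min' hQ hP hx]; exact Finset.min'_mem _ _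

lemma fQ_of_not_mem (hx : x ∉ vertsQ Q) : fQ Q x = x := by
  unfold fQ
  have : Q.filter (fun P => x ∈ P) = ∅ := by
    refine Finset.filter_eq_empty_iff.mpr fun P hP hxP => ?_
    exact hx (Finset.mem_biUnion.mpr ⟨P, hP, hxP⟩)
  rw [this]
  simp

lemma part_eq_filter (hQ : Q ∈ validQ n) {P : Finset (Fin n)} (hP : P ∈ Q)
    {x : Fin n} (hx : x ∈ P) :
    P = (vertsQ Q).filter (fun y => fQ Q y = fQ Q x) := by
  ext y
  simp only [mem_filter]
  constructor
  · intro hy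
    refine ⟨Finset.mem_biUnion.mpr ⟨P, hP, hy⟩, ?_⟩
    rw [fQ_eq_min' hQ hP hy, fQ_eq_min' hQ hP hx]
  · rintro ⟨hyv, hf⟩
    obtain ⟨P', hP', hyP'⟩ := Finset.mem_biUnion.mp hyv
    have h1 : fQ Q y ∈ P' := fQ_mem hQ hP' hyP'
    have h2 : fQ Q x ∈ P := fQ_mem hQ hP hx
    by_cases hpp : P' = P
    · rwa [← hpp]
    · exfalso
      simp only [validQ, mem_filter, mem_univ, true_and] at hQ
      exact (Finset.disjoint_left.mp (hQ.2 P' hP' P hP hpp) h1) (hf ▸ h2)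

lemma validQ_inj (hQ : Q ∈ validQ n) (hQ' : Q' ∈ validQ n)
    (hv : vertsQ Q = vertsQ Q') (hf : fQ Q = fQ Q') : Q = Q' := by
  have key : ∀ Q₁ Q₂ : Finset (Finset (Fin n)), Q₁ ∈ validQ n → Q₂ ∈ validQ n →
      vertsQ Q₁ = vertsQ Q₂ → fQ Q₁ = fQ Q₂ → Q₁ ⊆ Q₂ := by
    intro Q₁ Q₂ h1 h2 hv12 hf12 P hP
    have hPne : P.Nonempty := by
      simp only [validQ, mem_filter, mem_univ, true_and] at h1
      exact h1.1 P hP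
    obtain ⟨x, hx⟩ := hPne
    have hxv : x ∈ vertsQ Q₂ := hv12 ▸ Finset.mem_biUnion.mpr ⟨P, hP, hx⟩
    obtain ⟨P', hP', hxP'⟩ := Finset.mem_biUnion.mp hxv
    have e1 : P = (vertsQ Q₁).filter (fun y => fQ Q₁ y = fQ Q₁ x) :=
      part_eq_filter h1 hP hx
    have e2 : P' = (vertsQ Q₂).filter (fun y => fQ Q₂ y = fQ Q₂ x) :=
      part_eq_filter h2 hP' hxP'
    have : P = P' := by rw [e1, e2, hv12, hf12]
    rwa [this]
  exact Finset.Subset.antisymm (key Q Q' hQ hQ' hv hf) (key Q' Q hQ' hQ hv.symm hf.symm)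

lemma count_validQ (n m : ℕ) :
    ((validQ n).filter (fun Q => (vertsQ Q).card = m)).card ≤ n.choose m * m ^ m := by
  classical
  have hmain : ((validQ n).filter (fun Q => (vertsQ Q).card = m)).card
      ≤ ((Finset.univ.powersetCard m).sigma
          (fun V' : Finset (Fin n) => Fintype.piFinset
            (fun x => if x ∈ V' then V' else {x}))).card := by
    refine Finset.card_le_card_of_injOn
      (fun Q => ⟨vertsQ Q, fQ Q⟩) ?_ ?_
    · intro Q hQ
      simp only [Finset.mem_coe, mem_filter] at hQ
      dsimp only
      refine Finset.mem_sigma.mpr ⟨?_, ?_⟩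
      · exact Finset.mem_powersetCard.mpr ⟨Finset.subset_univ _, hQ.2⟩
      · refine Fintype.mem_piFinset.mpr fun x => ?_
        show fQ Q x ∈ (if x ∈ vertsQ Q then vertsQ Q else {x})
        by_cases hx : x ∈ vertsQ Q
        · rw [if_pos hx]
          obtain ⟨P, hP, hxP⟩ := Finset.mem_biUnion.mp hx
          exact Finset.mem_biUnion.mpr ⟨P, hP, fQ_mem hQ.1 hP hxP⟩
        · rw [if_neg hx]
          rw [fQ_of_not_mem hx]
          exact Finset.mem_singleton_self x
    · intro Q hQ Q' hQ' heq
      simp only [Finset.coe_filter, Set.mem_setOf_eq] at hQ hQ'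
      dsimp only at heq
      have h1 : vertsQ Q = vertsQ Q' := congrArg Sigma.fst heq
      have h2 : fQ Q = fQ Q' := by
        have h3 := Sigma.ext_iff.mp heq
        exact eq_of_heq h3.2
      exact validQ_inj hQ.1 hQ'.1 h1 h2
  refine hmain.trans ?_
  rw [Finset.card_sigma]
  have : ∀ V' ∈ Finset.univ.powersetCard m,
      (Fintype.piFinset (fun x => if x ∈ V' then V' else ({x} : Finset (Fin n)))).card
        = m ^ m := by
    intro V' hV'
    have hcard : V'.card = m := (Finset.mem_powersetCard.mp hV').2
    rw [Fintype.card_piFinset]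
    calc ∏ x : Fin n, (if x ∈ V' then V' else ({x} : Finset (Fin n))).card
        = ∏ x : Fin n, (if x ∈ V' then m else 1) := by
          refine Finset.prod_congr rfl fun x _ => ?_
          split_ifs
          · exact hcard
          · exact Finset.card_singleton x
      _ = ∏ x ∈ Finset.univ.filter (fun x => x ∈ V'), m := (Finset.prod_filter _ _).symm
      _ = m ^ m := by
          rw [Finset.prod_const]
          congr 1
          rw [Finset.filter_mem_eq_inter, Finset.univ_inter, hcard]
  rw [Finset.sum_congr rfl this, Finset.sum_const, smul_eq_mul, Finset.card_powersetCard,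
    Finset.card_univ, Fintype.card_fin]


lemma const_ineq : (0.53:ℝ) * Real.log 2 * (1 + 1/10000) ≤ (1 - 1/10000)^2 * Real.exp (-1) := by
  have h1 : Real.log 2 < 0.6931471808 := Real.log_two_lt_d9
  have h2 : Real.exp 1 < 2.7182818286 := Real.exp_one_lt_d9
  have h3 : Real.exp (-1) = (Real.exp 1)⁻¹ := Real.exp_neg 1
  have h4 : ((2.7182818286:ℝ))⁻¹ < (Real.exp 1)⁻¹ := by
    apply inv_strictAnti₀ (Real.exp_pos 1) h2
  have h5 : (0:ℝ) < Real.log 2 := Real.log_pos (by norm_num)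
  rw [h3]
  nlinarith [h4, h1, h5]

lemma pow_self_le (m : ℕ) : (m:ℝ)^m ≤ Real.exp 1 ^ m * m.factorial := by
  have h1 : (m:ℝ)^m / m.factorial ≤ Real.exp m := by
    have h2 := Real.sum_le_exp_of_nonneg (x := (m:ℝ)) (by positivity) (m+1)
    refine le_trans ?_ h2
    refine Finset.single_le_sum (f := fun i => (m:ℝ)^i / i.factorial) ?_ ?_
    · intro i _; positivity
    · exact Finset.self_mem_range_succ m
  have h3 : (0:ℝ) < m.factorial := by exact_mod_cast m.factorial_pos
  rw [div_le_iff₀ h3] at h1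
  calc (m:ℝ)^m ≤ Real.exp m * m.factorial := h1
    _ = Real.exp 1 ^ m * m.factorial := by rw [Real.exp_one_pow]

lemma geom_bound (r : ℝ) (h0 : 0 ≤ r) (h2 : r ≤ 1/2) (n : ℕ) :
    ∑ m ∈ Finset.Icc 1 n, r^m ≤ 2*r := by
  have hins : Finset.range (n+1) = insert 0 (Finset.Icc 1 n) := by
    ext m
    simp only [Finset.mem_range, Finset.mem_insert, Finset.mem_Icc]
    omega
  have h0mem : 0 ∉ Finset.Icc 1 n := by simp
  have heq : ∑ m ∈ Finset.Icc 1 n, r^m = (∑ m ∈ Finset.range (n+1), r^m) - 1 := by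
    rw [hins, Finset.sum_insert h0mem, pow_zero]; ring
  have hne : r ≠ 1 := by intro h; rw [h] at h2; norm_num at h2
  rw [heq, geom_sum_eq hne (n+1)]
  rw [sub_le_iff_le_add, div_le_iff_of_neg (by linarith : r - 1 < 0)]
  nlinarith [pow_nonneg h0 (n+1), mul_nonneg h0 (by linarith : (0:ℝ) ≤ 1 - 2*r)]



lemma exists_goodE (d : ℕ) (hd : 2 ≤ d) :
    ∀ᶠ n : ℕ in Filter.atTop,
      ∃ E : Finset (Finset (Fin n)),
        (∀ e ∈ E, e.card = d) ∧
        ((1 - 1/10000 : ℝ)^2 * Real.exp (-1) * (n:ℝ)^d / d.factorial ≤ E.card) ∧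
        (∀ Q ∈ validQ n, TQ d Q ⊆ E →
          ((TQ d Q).card : ℝ) ≤ (1 + 1/10000) * Real.log n * (vertsQ Q).card) := by
  have ev3 : ∀ᶠ n : ℕ in Filter.atTop, (40000:ℝ) ≤ Real.log n :=
    (Real.tendsto_log_atTop.comp tendsto_natCast_atTop_atTop).eventually_ge_atTop _
  have ev4 : ∀ᶠ n : ℕ in Filter.atTop, (2400000000:ℝ) * d.factorial ≤ (n:ℝ) :=
    tendsto_natCast_atTop_atTop.eventually_ge_atTop _
  filter_upwards [Filter.eventually_ge_atTop 2, Filter.eventually_ge_atTop (10000*d*d),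
    ev3, ev4] with n h1 h2 h3 h4
  classical
  set p : ℝ := Real.exp (-1) with hpdef
  have hp0 : 0 < p := Real.exp_pos _
  have hp1 : p ≤ 1 := Real.exp_le_one_iff.mpr (by norm_num)
  have hp3 : (1:ℝ)/3 ≤ p := by
    have h2' : Real.exp 1 ≤ 3 := le_of_lt (lt_trans Real.exp_one_lt_d9 (by norm_num))
    rw [hpdef, Real.exp_neg, ← one_div]
    exact one_div_le_one_div_of_le (Real.exp_pos 1) h2'
  set S : Finset (Finset (Fin n)) := Finset.univ.filter (fun e => e.card = d) with hSdef
  have hdn : d ≤ n := by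
    refine le_trans ?_ h2
    have h := Nat.mul_le_mul_right d (show 1 ≤ 10000*d by omega)
    simpa using h
  have hNchoose : S.card = n.choose d := by
    have : S = Finset.powersetCard d Finset.univ := by
      ext e
      simp only [hSdef, Finset.mem_filter, Finset.mem_univ, true_and,
        Finset.mem_powersetCard, Finset.subset_univ]
    rw [this, Finset.card_powersetCard, Finset.card_univ, Fintype.card_fin]
  -- lower bound on the number of potential edges
  have hNlow : (1 - 1/10000 : ℝ) * (n:ℝ)^d / d.factorial ≤ S.card := by
    have hnat : (n - d)^d ≤ d.factorial * (n.choose d) := by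
      calc (n - d)^d ≤ (n + 1 - d)^d := Nat.pow_le_pow_left (by omega) d
        _ ≤ n.descFactorial d := Nat.pow_sub_le_descFactorial n d
        _ = d.factorial * n.choose d := Nat.descFactorial_eq_factorial_mul_choose n d
    have hcast : ((n:ℝ) - d)^d ≤ (d.factorial : ℝ) * (n.choose d) := by
      have h5 : ((n - d : ℕ) : ℝ) = (n:ℝ) - d := by
        rw [Nat.cast_sub hdn]
      calc ((n:ℝ) - d)^d = (((n - d : ℕ) : ℝ))^d := by rw [h5]
        _ ≤ ((d.factorial * n.choose d : ℕ) : ℝ) := by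
            rw [← Nat.cast_pow]; exact_mod_cast hnat
        _ = (d.factorial : ℝ) * (n.choose d) := by push_cast; ring
    have hbern : (1 - 1/10000 : ℝ) * (n:ℝ)^d ≤ ((n:ℝ) - d)^d := by
      have hd0 : (0:ℝ) < d := by positivity
      have hb : (1 : ℝ) + (d:ℝ) * (-(1/10000 / d)) ≤ (1 + (-(1/10000 / d)))^d := by
        have hge : (-2:ℝ) ≤ -(1/10000 / d) := by
          have hup : (1:ℝ)/10000/d ≤ 1/10000 := by
            apply div_le_self (by norm_num)
            exact_mod_cast Nat.one_le_cast.mpr (by omega)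
          linarith
        exact one_add_mul_le_pow hge d
      have hb1 : (1 - 1/10000 : ℝ) ≤ (1 - 1/10000/d)^d := by
        have hdne : (d:ℝ) ≠ 0 := ne_of_gt hd0
        have : (d:ℝ) * (-(1/10000 / d)) = -(1/10000) := by
          rw [mul_neg, neg_inj, mul_comm]
          exact div_mul_cancel₀ _ hdne
        calc (1 - 1/10000 : ℝ) = 1 + (d:ℝ) * (-(1/10000 / d)) := by rw [this]; ring
          _ ≤ (1 + (-(1/10000 / d)))^d := hb
          _ = (1 - 1/10000/d)^d := by ring_nf
      have hb2 : (1 - 1/10000/d) * (n:ℝ) ≤ (n:ℝ) - d := by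
        have h2' : (10000 * d * d : ℝ) ≤ n := by exact_mod_cast h2
        have : (d:ℝ) ≤ (1/10000/d) * n := by
          rw [div_div, div_mul_eq_mul_div, le_div_iff₀ (by positivity)]
          nlinarith
        nlinarith
      have hb3 : (0:ℝ) ≤ (1 - 1/10000/d) := by
        have : (1:ℝ)/10000/d ≤ 1/10000 := by
          apply div_le_self (by norm_num)
          exact_mod_cast Nat.one_le_cast.mpr (by omega)
        linarith
      calc (1 - 1/10000 : ℝ) * (n:ℝ)^d ≤ (1 - 1/10000/d)^d * (n:ℝ)^d := by
            apply mul_le_mul_of_nonneg_right hb1 (by positivity)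
        _ = ((1 - 1/10000/d) * n)^d := by rw [mul_pow]
        _ ≤ ((n:ℝ) - d)^d := by
            apply pow_le_pow_left₀ (by positivity) hb2
    rw [hNchoose, div_le_iff₀ (by positivity : (0:ℝ) < (d.factorial:ℝ)), mul_comm ((n.choose d : ℕ):ℝ)]
    linarith
  have hnR : (2:ℝ) ≤ n := by exact_mod_cast h1
  have hNbig : (1200000000:ℝ) ≤ S.card := by
    have hfac : (1:ℝ) ≤ d.factorial := by exact_mod_cast d.factorial_pos
    have hnnd : (n:ℝ) ≤ (n:ℝ)^d := by
      have := Nat.le_self_pow (show d ≠ 0 by omega) n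
      exact_mod_cast this
    have : (1 - 1/10000 : ℝ) * (n:ℝ)^d / d.factorial ≥ (1/2) * (n:ℝ) / d.factorial := by
      apply div_le_div_of_nonneg_right ?_ (by positivity) |>.trans_eq rfl
      nlinarith
    have h4' : (1/2:ℝ) * (n:ℝ) / d.factorial ≥ 1200000000 := by
      rw [ge_iff_le, le_div_iff₀ (by positivity)]
      nlinarith
    linarith
  have hNpos : 0 < S.card := by
    rcases Nat.eq_zero_or_pos S.card with h | h
    · rw [h] at hNbig; norm_num at hNbig
    · exact h
  -- the bad events
  set A : Finset (Finset (Finset (Fin n))) :=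
    S.powerset.filter (fun E => (E.card:ℝ) ≤ (1 - 1/10000) * (p * S.card)) with hAdef
  have hA : ∑ E ∈ A, bw p S E ≤ 1/4 := by
    refine (bw_chebyshev hp0 hp1 (by norm_num : (0:ℝ) < 1/10000) hNpos).trans ?_
    have hmul : (1/3:ℝ) * 1200000000 ≤ p * S.card :=
      mul_le_mul hp3 hNbig (by norm_num) hp0.le
    have hden : (4:ℝ) ≤ (1/10000:ℝ)^2 * p * S.card := by nlinarith
    have h1p : 1 - p ≤ 1 := by linarith
    exact div_le_div₀ (by norm_num) h1p (by norm_num) hden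
  set D : ℝ := (1 + 1/10000) * Real.log n with hDdef
  have hD0 : 0 < D := by
    have : (0:ℝ) < Real.log n := by linarith
    positivity
  set badQs : Finset (Finset (Finset (Fin n))) :=
    (validQ n).filter (fun Q => D * (vertsQ Q).card < ((TQ d Q).card : ℝ)) with hbaddef
  set B : Finset (Finset (Finset (Fin n))) :=
    S.powerset.filter (fun E => ∃ Q ∈ badQs, TQ d Q ⊆ E) with hBdef
  have hTsub : ∀ Q ∈ badQs, TQ d Q ⊆ S := by
    intro Q _ e he
    simp only [TQ, Finset.mem_filter] at he
    simp only [hSdef, Finset.mem_filter]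
    exact ⟨Finset.mem_univ e, he.2.1⟩
  have hB : ∑ E ∈ B, bw p S E ≤ 1/4 := by
    refine (bw_union_bound hp0.le hp1 badQs (TQ d) hTsub).trans ?_
    set r : ℝ := Real.exp (1 - (1/10000) * Real.log n) with hrdef
    have hr0 : 0 ≤ r := (Real.exp_pos _).le
    have hrsmall : r ≤ Real.exp (-3) := by
      apply Real.exp_le_exp.mpr
      linarith
    have hexp3 : Real.exp (-3) ≤ 1/8 := by
      have h8 : (8:ℝ) ≤ Real.exp 3 := by
        have hh : Real.exp 3 = Real.exp 1 ^ 3 := by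
          rw [← Real.exp_nat_mul]; norm_num
        have h27 : (2.7:ℝ) ≤ Real.exp 1 := by nlinarith [Real.exp_one_gt_d9]
        have hcube : (2.7:ℝ)^3 ≤ Real.exp 1 ^ 3 := pow_le_pow_left₀ (by norm_num) h27 3
        rw [hh]; nlinarith [hcube]
      rw [Real.exp_neg, inv_eq_one_div]
      exact one_div_le_one_div_of_le (by norm_num) h8
    calc ∑ Q ∈ badQs, p ^ (TQ d Q).card
        ≤ ∑ Q ∈ badQs, Real.exp (-(D * (vertsQ Q).card)) := by
          refine Finset.sum_le_sum fun Q hQ => ?_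
          simp only [hbaddef, Finset.mem_filter] at hQ
          have hk : D * (vertsQ Q).card ≤ ((TQ d Q).card : ℝ) := le_of_lt hQ.2
          rw [hpdef, ← Real.exp_nat_mul]
          apply Real.exp_le_exp.mpr
          push_cast
          linarith
      _ = ∑ m ∈ Finset.Icc 1 n, ∑ Q ∈ badQs.filter (fun Q => (vertsQ Q).card = m),
            Real.exp (-(D * (vertsQ Q).card)) := by
          have hmap : ∀ Q ∈ badQs, (vertsQ Q).card ∈ Finset.Icc 1 n := by
            intro Q hQ
            simp only [hbaddef, Finset.mem_filter] at hQ
            refine Finset.mem_Icc.mpr ⟨?_, ?_⟩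
            · by_contra hm
              push_neg at hm
              have hm0 : (vertsQ Q).card = 0 := by omega
              have hvempty : vertsQ Q = ∅ := Finset.card_eq_zero.mp hm0
              have hT0 : TQ d Q = ∅ := by
                refine Finset.eq_empty_of_forall_notMem fun e he => ?_
                simp only [TQ, Finset.mem_filter] at he
                have hsub := he.2.2.1
                rw [hvempty, Finset.subset_empty] at hsub
                have hcd := he.2.1
                rw [hsub] at hcd
                simp at hcd
                omega
              have hbad := hQ.2
              rw [hm0, hT0] at hbad
              norm_num at hbad
            · calc (vertsQ Q).card ≤ Fintype.card (Fin n) := Finset.card_le_univ _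
                _ = n := Fintype.card_fin n
          exact (Finset.sum_fiberwise_of_maps_to hmap _).symm
      _ ≤ ∑ m ∈ Finset.Icc 1 n, r ^ m := by
          refine Finset.sum_le_sum fun m hm => ?_
          calc ∑ Q ∈ badQs.filter (fun Q => (vertsQ Q).card = m),
                Real.exp (-(D * (vertsQ Q).card))
              = ∑ Q ∈ badQs.filter (fun Q => (vertsQ Q).card = m),
                Real.exp (-(D * m)) := by
                refine Finset.sum_congr rfl fun Q hQ => ?_
                rw [(Finset.mem_filter.mp hQ).2]
            _ = (badQs.filter (fun Q => (vertsQ Q).card = m)).card * Real.exp (-(D * m)) := by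
                rw [Finset.sum_const, nsmul_eq_mul]
            _ ≤ ((n.choose m * m ^ m : ℕ) : ℝ) * Real.exp (-(D * m)) := by
                apply mul_le_mul_of_nonneg_right ?_ (Real.exp_pos _).le
                have hsub : badQs.filter (fun Q => (vertsQ Q).card = m)
                    ⊆ (validQ n).filter (fun Q => (vertsQ Q).card = m) :=
                  Finset.filter_subset_filter _ (Finset.filter_subset _ _)
                exact_mod_cast (Finset.card_le_card hsub).trans (count_validQ n m)
            _ ≤ r ^ m := by
                have hc1 : ((n.choose m * m ^ m : ℕ) : ℝ)
                    ≤ Real.exp 1 ^ m * (n:ℝ) ^ m := by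
                  push_cast
                  calc (n.choose m : ℝ) * (m:ℝ) ^ m
                      ≤ (n.choose m : ℝ) * (Real.exp 1 ^ m * m.factorial) := by
                        apply mul_le_mul_of_nonneg_left (pow_self_le m) (by positivity)
                    _ = Real.exp 1 ^ m * ((n.choose m * m.factorial : ℕ) : ℝ) := by
                        push_cast; ring
                    _ ≤ Real.exp 1 ^ m * (n:ℝ) ^ m := by
                        apply mul_le_mul_of_nonneg_left ?_ (by positivity)
                        have : n.choose m * m.factorial ≤ n ^ m := by
                          rw [mul_comm, ← Nat.descFactorial_eq_factorial_mul_choose]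
                          exact Nat.descFactorial_le_pow n m
                        exact_mod_cast this
                have hexpD : Real.exp (-(D * m)) = Real.exp (-D) ^ m := by
                  rw [← Real.exp_nat_mul]; congr 1; ring
                have hn0 : (0:ℝ) < (n:ℝ) := by exact_mod_cast (by omega : 0 < n)
                have hprod : Real.exp 1 * (n:ℝ) * Real.exp (-D) = r := by
                  calc Real.exp 1 * (n:ℝ) * Real.exp (-D)
                      = Real.exp 1 * Real.exp (Real.log (n:ℝ)) * Real.exp (-D) := by
                        rw [Real.exp_log hn0]
                    _ = Real.exp (1 + Real.log (n:ℝ) + -D) := by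
                        rw [← Real.exp_add, ← Real.exp_add]
                    _ = r := by rw [hrdef, hDdef]; congr 1; ring
                calc ((n.choose m * m ^ m : ℕ) : ℝ) * Real.exp (-(D * m))
                    ≤ (Real.exp 1 ^ m * (n:ℝ) ^ m) * Real.exp (-D) ^ m := by
                      rw [hexpD]
                      apply mul_le_mul_of_nonneg_right hc1 (by positivity)
                  _ = (Real.exp 1 * (n:ℝ) * Real.exp (-D)) ^ m := by
                      rw [mul_pow, mul_pow]
                  _ = r ^ m := by rw [hprod]
      _ ≤ 2 * r := geom_bound r hr0 (by linarith) n
      _ ≤ 1/4 := by nlinarith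
  -- a good E exists
  have hABsub : A ∪ B ⊆ S.powerset := Finset.union_subset
    (Finset.filter_subset _ _) (Finset.filter_subset _ _)
  have hexE : ∃ E ∈ S.powerset, E ∉ A ∪ B := by
    by_contra hc
    push_neg at hc
    have heq : A ∪ B = S.powerset := Finset.Subset.antisymm hABsub hc
    have h6 : ∑ E ∈ A ∪ B, bw p S E + ∑ E ∈ A ∩ B, bw p S E
        = ∑ E ∈ A, bw p S E + ∑ E ∈ B, bw p S E := Finset.sum_union_inter
    have h7 : (0:ℝ) ≤ ∑ E ∈ A ∩ B, bw p S E :=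
      Finset.sum_nonneg fun E _ => bw_nonneg hp0.le hp1 E
    rw [heq, bw_total] at h6
    linarith
  obtain ⟨E, hEpow, hEnotAB⟩ := hexE
  have hES : E ⊆ S := Finset.mem_powerset.mp hEpow
  refine ⟨E, ?_, ?_, ?_⟩
  · intro e he
    have := hES he
    simp only [hSdef, Finset.mem_filter] at this
    exact this.2
  · have hEnotA : E ∉ A := fun h => hEnotAB (Finset.mem_union_left _ h)
    have : ¬ ((E.card:ℝ) ≤ (1 - 1/10000) * (p * S.card)) := by
      intro h
      exact hEnotA (Finset.mem_filter.mpr ⟨hEpow, h⟩)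
    push_neg at this
    calc (1 - 1/10000 : ℝ)^2 * Real.exp (-1) * (n:ℝ)^d / d.factorial
        = (1 - 1/10000) * p * ((1 - 1/10000) * (n:ℝ)^d / d.factorial) := by
          rw [hpdef]; ring
      _ ≤ (1 - 1/10000) * p * S.card := by
          apply mul_le_mul_of_nonneg_left hNlow (by positivity)
      _ = (1 - 1/10000) * (p * S.card) := by ring
      _ ≤ E.card := this.le
  · intro Q hQ hTQE
    by_contra hcon
    push_neg at hcon
    have hQbad : Q ∈ badQs := Finset.mem_filter.mpr ⟨hQ, hcon⟩
    have : E ∈ B := Finset.mem_filter.mpr ⟨hEpow, ⟨Q, hQbad, hTQE⟩⟩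
    exact hEnotAB (Finset.mem_union_right _ this)

-- bridge lemmas
lemma cuph_edges_sub {n d : ℕ} {E : Finset (Finset (Fin n))} (C : CuphSub (Fin n) d E) :
    C.edges ⊆ E := by
  intro e he
  simp only [CuphSub.edges, Finset.mem_filter, Finset.mem_univ, true_and] at he
  exact C.sub e he

lemma cuph_verts {n d : ℕ} {E : Finset (Finset (Fin n))} (C : CuphSub (Fin n) d E) :
    vertsQ (Finset.univ.image C.parts) = C.verts := by
  ext x
  simp only [vertsQ, CuphSub.verts, Finset.mem_biUnion, Finset.mem_image,
    Finset.mem_univ, true_and, id]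
  constructor
  · rintro ⟨P, ⟨i, rfl⟩, hx⟩; exact ⟨i, hx⟩
  · rintro ⟨i, hx⟩; exact ⟨C.parts i, ⟨i, rfl⟩, hx⟩

lemma cuph_TQ {n d : ℕ} {E : Finset (Finset (Fin n))} (C : CuphSub (Fin n) d E) :
    TQ d (Finset.univ.image C.parts) = C.edges := by
  ext e
  simp only [TQ, CuphSub.edges, Finset.mem_filter, Finset.mem_univ, true_and,
    cuph_verts C]
  constructor
  · rintro ⟨h1, h2, h3⟩
    exact ⟨h1, h2, fun i => h3 _ (Finset.mem_image.mpr ⟨i, Finset.mem_univ i, rfl⟩)⟩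
  · rintro ⟨h1, h2, h3⟩
    refine ⟨h1, h2, fun P hP => ?_⟩
    obtain ⟨i, -, rfl⟩ := Finset.mem_image.mp hP
    exact h3 i

lemma cuph_valid {n d : ℕ} {E : Finset (Finset (Fin n))} (C : CuphSub (Fin n) d E) :
    Finset.univ.image C.parts ∈ validQ n := by
  simp only [validQ, Finset.mem_filter, Finset.mem_univ, true_and]
  constructor
  · intro P hP
    obtain ⟨i, -, rfl⟩ := Finset.mem_image.mp hP
    exact C.nonempty i
  · intro P hP P' hP' hne
    obtain ⟨i, -, rfl⟩ := Finset.mem_image.mp hP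
    obtain ⟨j, -, rfl⟩ := Finset.mem_image.mp hP'
    exact C.disjoint i j fun h => hne (by rw [h])


end AuxCMcover

/-- **Random hypergraphs are hard to cover.**  For every `d ≥ 2` there is `n₀`
such that for every `n ≥ n₀` there is a `d`-uniform hypergraph `H` on `n`
vertices whose fractional vertex CM-cover number satisfies
`vc*_CM(H) ≥ (0.53/d!) · n^(d-1) / log₂ n`; i.e. every fractional CM-cover of
`H` (nonnegative weights on `(d,k)`-cuph subhypergraphs giving every edge total
weight at least `1`) has a vertex of load at least
`(0.53/d!) · n^(d-1) / log₂ n`. -/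
theorem exists_hypergraph_large_fractional_cover_number (d : ℕ) (hd : 2 ≤ d) :
    ∃ n₀ : ℕ, ∀ n : ℕ, n₀ ≤ n →
      ∃ E : Finset (Finset (Fin n)), (∀ e ∈ E, e.card = d) ∧
        ∀ (M : ℕ) (f : Fin M → CuphSub (Fin n) d E) (w : Fin M → ℝ),
          (∀ i, 0 ≤ w i) →
          (∀ e ∈ E,
            1 ≤ ∑ i ∈ Finset.univ.filter (fun i : Fin M => e ∈ (f i).edges), w i) →
          ∃ v : Fin n,
            (0.53 / d.factorial) * n ^ (d - 1) / Real.logb 2 n ≤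
              ∑ i ∈ Finset.univ.filter (fun i : Fin M => v ∈ (f i).verts), w i := by
  have hev := (exists_goodE d hd).and (Filter.eventually_ge_atTop 2)
  rw [Filter.eventually_atTop] at hev
  obtain ⟨n₀, hn₀⟩ := hev
  refine ⟨n₀, fun n hn => ?_⟩
  obtain ⟨⟨E, hEd, hEcard, hEdens⟩, h2n⟩ := hn₀ n hn
  refine ⟨E, hEd, ?_⟩
  intro M f w hw hcov
  have hn0 : 0 < n := by omega
  have hn1R : (1:ℝ) < n := by exact_mod_cast h2n
  have hlogpos : 0 < Real.log n := Real.log_pos hn1R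
  set D : ℝ := (1 + 1/10000) * Real.log n with hDdef
  have hD0 : 0 < D := by positivity
  have hkey : ∀ i : Fin M, ((f i).edges.card : ℝ) ≤ D * ((f i).verts.card) := by
    intro i
    have h := hEdens _ (cuph_valid (f i))
      (by rw [cuph_TQ]; exact cuph_edges_sub (f i))
    rwa [cuph_TQ, cuph_verts] at h
  have hswap1 : ∑ v : Fin n, ∑ i ∈ Finset.univ.filter (fun i : Fin M => v ∈ (f i).verts), w i
      = ∑ i : Fin M, w i * ((f i).verts.card : ℝ) := by
    calc ∑ v : Fin n, ∑ i ∈ Finset.univ.filter (fun i : Fin M => v ∈ (f i).verts), w i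
        = ∑ v : Fin n, ∑ i : Fin M, (if v ∈ (f i).verts then w i else 0) := by
          refine Finset.sum_congr rfl fun v _ => ?_
          rw [Finset.sum_filter]
      _ = ∑ i : Fin M, ∑ v : Fin n, (if v ∈ (f i).verts then w i else 0) := by
          rw [Finset.sum_comm]
      _ = ∑ i : Fin M, w i * ((f i).verts.card : ℝ) := by
          refine Finset.sum_congr rfl fun i _ => ?_
          rw [← Finset.sum_filter, Finset.filter_mem_eq_inter, Finset.univ_inter,
            Finset.sum_const, nsmul_eq_mul, mul_comm]
  have hswap2 : ∑ e ∈ E, ∑ i ∈ Finset.univ.filter (fun i : Fin M => e ∈ (f i).edges), w i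
      = ∑ i : Fin M, w i * ((f i).edges.card : ℝ) := by
    calc ∑ e ∈ E, ∑ i ∈ Finset.univ.filter (fun i : Fin M => e ∈ (f i).edges), w i
        = ∑ e ∈ E, ∑ i : Fin M, (if e ∈ (f i).edges then w i else 0) := by
          refine Finset.sum_congr rfl fun e _ => ?_
          rw [Finset.sum_filter]
      _ = ∑ i : Fin M, ∑ e ∈ E, (if e ∈ (f i).edges then w i else 0) := by
          rw [Finset.sum_comm]
      _ = ∑ i : Fin M, w i * ((f i).edges.card : ℝ) := by
          refine Finset.sum_congr rfl fun i _ => ?_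
          rw [← Finset.sum_filter, Finset.filter_mem_eq_inter,
            Finset.inter_eq_right.mpr (cuph_edges_sub (f i)),
            Finset.sum_const, nsmul_eq_mul, mul_comm]
  have hElower : (E.card:ℝ) ≤ ∑ i : Fin M, w i * ((f i).edges.card:ℝ) := by
    rw [← hswap2]
    calc (E.card:ℝ) = ∑ e ∈ E, (1:ℝ) := by
          rw [Finset.sum_const, nsmul_eq_mul, mul_one]
      _ ≤ _ := Finset.sum_le_sum fun e he => hcov e he
  have hload : (E.card:ℝ) ≤ D * ∑ v : Fin n,
      ∑ i ∈ Finset.univ.filter (fun i : Fin M => v ∈ (f i).verts), w i := by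
    rw [hswap1, Finset.mul_sum]
    refine hElower.trans (Finset.sum_le_sum fun i _ => ?_)
    calc w i * ((f i).edges.card:ℝ) ≤ w i * (D * ((f i).verts.card:ℝ)) :=
          mul_le_mul_of_nonneg_left (hkey i) (hw i)
      _ = D * (w i * ((f i).verts.card:ℝ)) := by ring
  -- final numeric comparison
  obtain ⟨k, rfl⟩ : ∃ k, d = k + 1 := ⟨d - 1, by omega⟩
  have hfacne : ((k+1).factorial : ℝ) ≠ 0 := by positivity
  have hfacpos : (0:ℝ) < ((k+1).factorial : ℝ) := by positivity
  have hlogne : Real.log n ≠ 0 := ne_of_gt hlogpos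
  have heq : (n:ℝ) * ((0.53 / ((k+1).factorial:ℝ)) * (n:ℝ) ^ (k + 1 - 1) / Real.logb 2 n) * D
      = (0.53 * Real.log 2 * (1 + 1/10000)) * (n:ℝ)^(k+1) / ((k+1).factorial:ℝ) := by
    simp only [Nat.add_sub_cancel, Real.logb, hDdef]
    field_simp
    ring
  have hconst : (0.53 * Real.log 2 * (1 + 1/10000)) * (n:ℝ)^(k+1) / ((k+1).factorial:ℝ)
      ≤ (1 - 1/10000 : ℝ)^2 * Real.exp (-1) * (n:ℝ)^(k+1) / ((k+1).factorial:ℝ) := by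
    rw [div_le_div_iff₀ hfacpos hfacpos]
    have := mul_le_mul_of_nonneg_right const_ineq (by positivity : (0:ℝ) ≤ (n:ℝ)^(k+1))
    nlinarith [hfacpos]
  have hfinal : (n:ℝ) * ((0.53 / ((k+1).factorial:ℝ)) * (n:ℝ) ^ (k + 1 - 1) / Real.logb 2 n) * D
      ≤ E.card := by
    rw [heq]
    exact hconst.trans hEcard
  have huniv : (Finset.univ : Finset (Fin n)).Nonempty := ⟨⟨0, hn0⟩, Finset.mem_univ _⟩
  have hsum : ∑ _v : Fin n, ((0.53 / ((k+1).factorial:ℝ)) * (n:ℝ) ^ (k + 1 - 1) / Real.logb 2 n)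
      ≤ ∑ v : Fin n, ∑ i ∈ Finset.univ.filter (fun i : Fin M => v ∈ (f i).verts), w i := by
    rw [Finset.sum_const, Finset.card_univ, Fintype.card_fin, nsmul_eq_mul]
    apply le_of_mul_le_mul_right ?_ hD0
    calc (n:ℝ) * ((0.53 / ((k+1).factorial:ℝ)) * (n:ℝ) ^ (k + 1 - 1) / Real.logb 2 n) * D
        ≤ E.card := hfinal
      _ ≤ D * ∑ v : Fin n, ∑ i ∈ Finset.univ.filter (fun i : Fin M => v ∈ (f i).verts), w i :=
          hload
      _ = (∑ v : Fin n, ∑ i ∈ Finset.univ.filter (fun i : Fin M => v ∈ (f i).verts), w i) * D := by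
          ring
  obtain ⟨v, -, hv⟩ := Finset.exists_le_of_sum_le huniv hsum
  exact ⟨v, hv⟩
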